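/- For every flat layout L, coal(L) is the unique flat layout of minimal rank whose layout function equals Φ_L: if L' is any flat layout with Φ_{L'} = Φ_L (same size and equal layout functions), then rank(coal(L)) ≤ rank(L'), and equality holds if and only if L' = coal(L). -/

import Mathlib

/-- A flat layout, represented as its list of modes `(sᵢ, dᵢ)`:
the first component of each mode is a shape entry, the second a stride entry. -/
abbrev FlatLayout := List (ℕ × ℕ)

namespace FlatLayout

/-- Validity of a flat layout: every shape entry is a positive integer. -/
def Valid (L : FlatLayout) : Prop := ∀ p ∈ L, 0 < p.1

/-- The size of a flat layout: the product of its shape entries. -/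
def size (L : FlatLayout) : ℕ := (L.map Prod.fst).prod

/-- The cosize of a flat layout: `1 + Σ (sᵢ - 1) * dᵢ`. -/
def cosize (L : FlatLayout) : ℕ := 1 + (L.map fun p => (p.1 - 1) * p.2).sum

/-- The rank of a flat layout: its number of modes. -/
def rank (L : FlatLayout) : ℕ := L.length

/-- The layout function `Φ_L`: `Φ_L(x) = Σ xᵢ·dᵢ` where
`xᵢ = ⌊x / (s₁⋯sᵢ₋₁)⌋ mod sᵢ`. -/
def phi : FlatLayout → ℕ → ℕ
  | [], _ => 0
  | (s, d) :: rest, x => x % s * d + phi rest (x / s)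

/-- `squeeze L` deletes every mode whose shape entry equals `1`. -/
def squeeze (L : FlatLayout) : FlatLayout := L.filter fun p => p.1 != 1

/-- `filterZeros L` deletes every mode whose stride entry equals `0`. -/
def filterZeros (L : FlatLayout) : FlatLayout := L.filter fun p => p.2 != 0

/-- The ordering on modes: `(s,d) ⪯ (s',d')` iff `d < d'`, or `d = d'` and `s ≤ s'`. -/
def ModeLE (p q : ℕ × ℕ) : Prop := p.2 < q.2 ∨ (p.2 = q.2 ∧ p.1 ≤ q.1)

instance : DecidableRel ModeLE := fun p q => by unfold ModeLE; infer_instance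

/-- A flat layout is sorted if its consecutive modes are `⪯`-increasing. -/
def Sorted (L : FlatLayout) : Prop := L.Chain' ModeLE

/-- `sortL L` stably sorts the modes of `L` with respect to `⪯`. -/
def sortL (L : FlatLayout) : FlatLayout := L.mergeSort fun p q => decide (ModeLE p q)

/-- A flat layout is coalesced if no shape entry equals `1` and
for consecutive modes, `sᵢ·dᵢ ≠ dᵢ₊₁`. -/
def Coalesced (L : FlatLayout) : Prop :=
  (∀ p ∈ L, p.1 ≠ 1) ∧ L.Chain' fun p q => p.1 * p.2 ≠ q.2

/-- Combine adjacent modes `(s,d), (s',d')` with `d' = s·d` into `(s·s', d)`, repeatedly. -/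
def coalAux : List (ℕ × ℕ) → List (ℕ × ℕ)
  | [] => []
  | p :: rest =>
    match coalAux rest with
    | [] => [p]
    | q :: rest' =>
        if p.1 * p.2 = q.2 then (p.1 * q.1, p.2) :: rest' else p :: q :: rest'

/-- Coalesce of a flat layout: squeeze, then repeatedly combine adjacent modes
`(s,d), (s',d')` with `d' = s·d` into `(s·s', d)`. -/
def coal (L : FlatLayout) : FlatLayout := coalAux (squeeze L)

/-- Compactness: the layout function takes values in `{0, …, cosize L - 1}` and induces a
bijection `{0, …, size L - 1} → {0, …, cosize L - 1}`. -/
def Compact (L : FlatLayout) : Prop :=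
  Set.BijOn (phi L) {x | x < size L} {y | y < cosize L}

/-- `B` is a complement of `A` (written `A ⊥ B`) if the concatenation `A ⋆ B` is compact. -/
def Perp (A B : FlatLayout) : Prop := Compact (A ++ B)

/-- `A` is complementable if, writing `sort(squeeze A) = (s₁,…,sₘ):(d₁,…,dₘ)`,
`sᵢ·dᵢ` divides `dᵢ₊₁` for all `1 ≤ i < m`. -/
def Complementable (A : FlatLayout) : Prop :=
  (sortL (squeeze A)).Chain' fun p q => p.1 * p.2 ∣ q.2

/-- `B` is an `N`-complement of `A` if `B` is a complement of `A`
and `size A * size B = N`. -/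
def IsNComplement (A B : FlatLayout) (N : ℕ) : Prop :=
  Perp A B ∧ size A * size B = N

/-- `A` is `N`-complementable if, writing `sort(squeeze A) = (s₁,…,sₘ):(d₁,…,dₘ)`,
`sᵢ·dᵢ ∣ dᵢ₊₁` for all `1 ≤ i < m`, and `sₘ·dₘ ∣ N`. -/
def NComplementable (A : FlatLayout) (N : ℕ) : Prop :=
  ((sortL (squeeze A)).Chain' fun p q => p.1 * p.2 ∣ q.2) ∧
  ∀ p, (sortL (squeeze A)).getLast? = some p → p.1 * p.2 ∣ N

/-- Given `l = [(s₁,d₁),…,(sₘ,dₘ)]`, the layout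
`C = (d₁, d₂/(s₁d₁), …, dₘ/(sₘ₋₁dₘ₋₁)) : (1, s₁d₁, …, sₘ₋₁dₘ₋₁)`. -/
def compModes (l : List (ℕ × ℕ)) : List (ℕ × ℕ) :=
  match l with
  | [] => []
  | (_, d₁) :: t =>
      (d₁, 1) :: (l.zip t).map fun pq => (pq.2.2 / (pq.1.1 * pq.1.2), pq.1.1 * pq.1.2)

/-- The complement `comp A = coal C` of a complementable flat layout `A`. -/
def comp (A : FlatLayout) : FlatLayout := coal (compModes (sortL (squeeze A)))

/-- Given `l = [(s₁,d₁),…,(sₘ,dₘ)]` and `N`, the layout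
`C = (d₁, d₂/(s₁d₁), …, dₘ/(sₘ₋₁dₘ₋₁), N/(sₘdₘ)) : (1, s₁d₁, …, sₘ₋₁dₘ₋₁, sₘdₘ)`. -/
def compNModes (l : List (ℕ × ℕ)) (N : ℕ) : List (ℕ × ℕ) :=
  match l.getLast? with
  | none => [(N, 1)]
  | some (sm, dm) => compModes l ++ [(N / (sm * dm), sm * dm)]

/-- The `N`-complement `comp(A, N) = coal C` of an `N`-complementable flat layout `A`. -/
def compN (A : FlatLayout) (N : ℕ) : FlatLayout :=
  coal (compNModes (sortL (squeeze A)) N)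

/-- `L` is tractable if, writing `sort L = (s₁,…,sₘ):(d₁,…,dₘ)`, for every `1 ≤ i < m`
either `dᵢ = 0` or `sᵢ·dᵢ` divides `dᵢ₊₁`. -/
def Tractable (L : FlatLayout) : Prop :=
  (sortL L).Chain' fun p q => p.2 = 0 ∨ p.1 * p.2 ∣ q.2

lemma phi_zero (L : FlatLayout) : phi L 0 = 0 := by
  induction L with
  | nil => rfl
  | cons p t ih => simp [phi, ih]

lemma size_nil : size ([] : FlatLayout) = 1 := rfl
lemma size_cons (p : ℕ × ℕ) (t : FlatLayout) : size (p :: t) = p.1 * size t := by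
  simp [size]

lemma one_le_size (L : FlatLayout) (h : ∀ p ∈ L, 1 ≤ p.1) : 1 ≤ size L := by
  induction L with
  | nil => simp [size_nil]
  | cons p t ih =>
    rw [size_cons]
    exact Nat.one_le_iff_ne_zero.mpr (Nat.mul_ne_zero
      (Nat.one_le_iff_ne_zero.mp (h p (by simp)))
      (Nat.one_le_iff_ne_zero.mp (ih fun q hq => h q (by simp [hq]))))

lemma phi_squeeze (L : FlatLayout) (x : ℕ) : phi (squeeze L) x = phi L x := by
  induction L generalizing x with
  | nil => rfl
  | cons p t ih =>
    rcases p with ⟨s, d⟩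
    by_cases h : s = 1
    · subst h
      have hsq : squeeze ((1,d) :: t) = squeeze t := by
        simp [squeeze, List.filter_cons]
      rw [hsq, ih]
      simp [phi, Nat.mod_one]
    · have hsq : squeeze ((s,d) :: t) = (s,d) :: squeeze t := by
        simp [squeeze, List.filter_cons, h]
      rw [hsq]
      simp [phi, ih]

lemma size_squeeze (L : FlatLayout) : size (squeeze L) = size L := by
  induction L with
  | nil => rfl
  | cons p t ih =>
    rcases p with ⟨s, d⟩
    by_cases h : s = 1
    · subst h
      have hsq : squeeze ((1,d) :: t) = squeeze t := by
        simp [squeeze, List.filter_cons]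
      rw [hsq, ih, size_cons]
      simp
    · have hsq : squeeze ((s,d) :: t) = (s,d) :: squeeze t := by
        simp [squeeze, List.filter_cons, h]
      rw [hsq, size_cons, size_cons, ih]

lemma phi_coalAux (l : List (ℕ × ℕ)) (x : ℕ) : phi (coalAux l) x = phi l x := by
  induction l generalizing x with
  | nil => rfl
  | cons p rest ih =>
    rcases p with ⟨s, d⟩
    show phi (match coalAux rest with
      | [] => [(s,d)]
      | q :: rest' => if (s,d).1 * (s,d).2 = q.2 then ((s,d).1 * q.1, (s,d).2) :: rest'
          else (s,d) :: q :: rest') x = _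
    rcases hr : coalAux rest with _ | ⟨⟨s₂, d₂⟩, rest'⟩
    · have : phi rest (x / s) = 0 := by rw [← ih, hr]; rfl
      simp [phi, this]
    · by_cases hmerge : s * d = d₂
      · simp only [hmerge, if_pos rfl]
        show phi ((s * s₂, d) :: rest') x = phi ((s,d) :: rest) x
        have hrest : phi rest (x / s) = phi ((s₂, d₂) :: rest') (x / s) := by
          rw [← hr, ih]
        simp only [phi, hrest]
        rw [Nat.mod_mul, Nat.div_div_eq_div_mul]
        rw [← hmerge]
        ring
      · simp only [if_neg hmerge]
        show phi ((s,d) :: (s₂,d₂) :: rest') x = phi ((s,d) :: rest) x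
        simp only [phi]
        rw [← ih, hr]
        rfl

lemma size_coalAux (l : List (ℕ × ℕ)) : size (coalAux l) = size l := by
  induction l with
  | nil => rfl
  | cons p rest ih =>
    rcases p with ⟨s, d⟩
    show size (match coalAux rest with
      | [] => [(s,d)]
      | q :: rest' => if (s,d).1 * (s,d).2 = q.2 then ((s,d).1 * q.1, (s,d).2) :: rest'
          else (s,d) :: q :: rest') = _
    rcases hr : coalAux rest with _ | ⟨⟨s₂, d₂⟩, rest'⟩
    · have h1 : size rest = 1 := by rw [← ih, hr]; rfl
      show size [(s,d)] = size ((s,d)::rest)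
      rw [size_cons, size_cons, h1, size_nil]
    · have hrest : size rest = size ((s₂, d₂) :: rest') := by rw [← hr, ih]
      by_cases hmerge : s * d = d₂
      · simp only [hmerge, if_pos rfl]
        show size ((s * s₂, d) :: rest') = _
        simp only [size_cons, hrest, size_cons]
        ring
      · simp only [if_neg hmerge]
        show size ((s,d) :: (s₂,d₂) :: rest') = _
        simp [size_cons, hrest]

lemma coalAux_shapes (l : List (ℕ × ℕ)) (h : ∀ p ∈ l, 2 ≤ p.1) :
    ∀ q ∈ coalAux l, 2 ≤ q.1 := by
  induction l with
  | nil => intro q hq; simp [coalAux] at hq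
  | cons p rest ih =>
    intro q hq
    have hih := ih (fun r hr => h r (by simp [hr]))
    have hp : 2 ≤ p.1 := h p (by simp)
    rcases p with ⟨s, d⟩
    rw [show coalAux ((s,d) :: rest) = (match coalAux rest with
      | [] => [(s,d)]
      | q :: rest' => if (s,d).1 * (s,d).2 = q.2 then ((s,d).1 * q.1, (s,d).2) :: rest'
          else (s,d) :: q :: rest') from rfl] at hq
    rcases hr : coalAux rest with _ | ⟨⟨s₂, d₂⟩, rest'⟩ <;> rw [hr] at hq
    · simp at hq; subst hq; exact hp
    · have h2 : 2 ≤ s₂ := hih (s₂, d₂) (by rw [hr]; simp)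
      by_cases hmerge : s * d = d₂
      · simp only [hmerge, if_pos rfl] at hq
        rcases List.mem_cons.mp hq with h1 | h1
        · subst h1
          calc 2 ≤ 2 * 2 := by norm_num
            _ ≤ s * s₂ := Nat.mul_le_mul hp h2
        · exact hih q (by rw [hr]; simp [h1])
      · simp only [if_neg hmerge] at hq
        rcases List.mem_cons.mp hq with h1 | h1
        · subst h1; exact hp
        · exact hih q (by rw [hr]; exact h1)

lemma coalAux_chain (l : List (ℕ × ℕ)) :
    (coalAux l).Chain' fun p q => p.1 * p.2 ≠ q.2 := by
  induction l with
  | nil => exact List.isChain_nil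
  | cons p rest ih =>
    rcases p with ⟨s, d⟩
    rw [show coalAux ((s,d) :: rest) = (match coalAux rest with
      | [] => [(s,d)]
      | q :: rest' => if (s,d).1 * (s,d).2 = q.2 then ((s,d).1 * q.1, (s,d).2) :: rest'
          else (s,d) :: q :: rest') from rfl]
    rcases hr : coalAux rest with _ | ⟨⟨s₂, d₂⟩, rest'⟩
    · exact List.isChain_singleton _
    · rw [hr] at ih
      by_cases hmerge : s * d = d₂
      · simp only [hmerge, if_pos rfl]
        rcases rest' with _ | ⟨⟨s₃, d₃⟩, rest''⟩
        · exact List.isChain_singleton _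
        · refine List.isChain_cons_cons.mpr ⟨?_, (List.isChain_cons_cons.mp ih).2⟩
          have := (List.isChain_cons_cons.mp ih).1
          simp only at this ⊢
          rw [← hmerge] at this
          intro hc; apply this; rw [← hc]; ring
      · simp only [if_neg hmerge]
        exact List.isChain_cons_cons.mpr ⟨hmerge, ih⟩

lemma coalAux_length (l : List (ℕ × ℕ)) :
    (coalAux l).length ≤ l.length ∧ ((coalAux l).length = l.length → coalAux l = l) := by
  induction l with
  | nil => simp [coalAux]
  | cons p rest ih =>
    rcases p with ⟨s, d⟩
    have hdef : coalAux ((s,d) :: rest) = (match coalAux rest with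
      | [] => [(s,d)]
      | q :: rest' => if (s,d).1 * (s,d).2 = q.2 then ((s,d).1 * q.1, (s,d).2) :: rest'
          else (s,d) :: q :: rest') := rfl
    rcases hr : coalAux rest with _ | ⟨⟨s₂, d₂⟩, rest'⟩ <;> rw [hr] at ih hdef
    · have hdef2 : coalAux ((s,d) :: rest) = [(s,d)] := hdef
      rw [hdef2]
      constructor
      · simp only [List.length_cons, List.length_nil]; omega
      · intro h
        simp only [List.length_cons, List.length_nil] at h
        have h0 : rest = [] := List.length_eq_zero_iff.mp (by omega)
        subst h0
        rfl
    · have hdef2 : coalAux ((s,d) :: rest) =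
          if s * d = d₂ then (s * s₂, d) :: rest' else (s,d) :: (s₂,d₂) :: rest' := hdef
      by_cases hmerge : s * d = d₂
      · rw [hdef2, if_pos hmerge]
        constructor
        · have h1 := ih.1
          simp only [List.length_cons] at h1 ⊢
          omega
        · intro h
          have h1 := ih.1
          simp only [List.length_cons] at h h1
          omega
      · rw [hdef2, if_neg hmerge]
        constructor
        · have h1 := ih.1
          simp only [List.length_cons] at h1 ⊢
          omega
        · intro h
          simp only [List.length_cons] at h
          have h2 : (s₂,d₂)::rest' = rest :=
            ih.2 (by simp only [List.length_cons]; omega)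
          rw [h2]

lemma squeeze_length (L : FlatLayout) :
    (squeeze L).length ≤ L.length ∧ ((squeeze L).length = L.length → squeeze L = L) := by
  constructor
  · exact List.length_filter_le _ _
  · intro h
    exact List.filter_eq_self.mpr (List.length_filter_eq_length_iff.mp h)
lemma phi_one (s d : ℕ) (t : FlatLayout) (hs : 2 ≤ s) : phi ((s,d) :: t) 1 = d := by
  have h1 : 1 % s = 1 := Nat.mod_eq_of_lt (by omega)
  have h2 : 1 / s = 0 := Nat.div_eq_of_lt (by omega)
  simp [phi, h1, h2, phi_zero]

lemma head_lt_absurd (s d s' d' : ℕ) (t1 t2 : FlatLayout)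
    (h1v : ∀ p ∈ (s,d) :: t1, 2 ≤ p.1)
    (h2v : ∀ p ∈ (s',d') :: t2, 2 ≤ p.1)
    (h1c : ((s,d) :: t1).Chain' fun p q => p.1 * p.2 ≠ q.2)
    (hs : size ((s,d) :: t1) = size ((s',d') :: t2))
    (hphi : ∀ x < size ((s,d) :: t1), phi ((s,d) :: t1) x = phi ((s',d') :: t2) x)
    (hd : d = d') (hlt : s < s') : False := by
  have hs2 : 2 ≤ s := h1v (s,d) (by simp)
  rcases t1 with _ | ⟨⟨s₂, d₂⟩, t1'⟩
  · have h1 : size ((s,d) :: ([] : FlatLayout)) = s := by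
      rw [size_cons, size_nil, mul_one]
    have h2 : s' ≤ size ((s',d') :: t2) := by
      rw [size_cons]
      have := one_le_size t2 (fun p hp => le_trans (by norm_num) (h2v p (by simp [hp])))
      nlinarith
    omega
  · have hs₂ : 2 ≤ s₂ := h1v (s₂,d₂) (by simp)
    have ht1' : 1 ≤ size t1' :=
      one_le_size _ (fun p hp => le_trans (by norm_num) (h1v p (by simp [hp])))
    have hlt_size : s < size ((s,d) :: (s₂,d₂) :: t1') := by
      rw [size_cons, size_cons]
      show s < s * (s₂ * size t1')
      have h2 : 2 ≤ s₂ * size t1' := by nlinarith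
      have h3 : s * 2 ≤ s * (s₂ * size t1') := Nat.mul_le_mul_left s h2
      linarith
    have heq := hphi s hlt_size
    have hL1 : phi ((s,d) :: (s₂,d₂) :: t1') s = d₂ := by
      have ha : s % s = 0 := Nat.mod_self s
      have hb : s / s = 1 := Nat.div_self (by omega)
      show s % s * d + phi ((s₂,d₂) :: t1') (s / s) = d₂
      rw [ha, hb, phi_one s₂ d₂ t1' hs₂, zero_mul, zero_add]
    have hL2 : phi ((s',d') :: t2) s = s * d' := by
      have ha : s % s' = s := Nat.mod_eq_of_lt hlt
      have hb : s / s' = 0 := Nat.div_eq_of_lt hlt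
      show s % s' * d' + phi t2 (s / s') = s * d'
      rw [ha, hb, phi_zero, add_zero]
    have hchain := (List.isChain_cons_cons.mp h1c).1
    apply hchain
    show s * d = d₂
    rw [hd, ← hL1, ← hL2, heq]

lemma coalesced_eq (L1 : FlatLayout) : ∀ (L2 : FlatLayout),
    (∀ p ∈ L1, 2 ≤ p.1) → (∀ p ∈ L2, 2 ≤ p.1) →
    (L1.Chain' fun p q => p.1 * p.2 ≠ q.2) → (L2.Chain' fun p q => p.1 * p.2 ≠ q.2) →
    size L1 = size L2 → (∀ x < size L1, phi L1 x = phi L2 x) → L1 = L2 := by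
  induction L1 with
  | nil =>
    intro L2 _ h2v _ _ hs _
    rcases L2 with _ | ⟨⟨s', d'⟩, t2⟩
    · rfl
    · exfalso
      have h2 : 2 ≤ size ((s',d') :: t2) := by
        rw [size_cons]
        have := h2v (s',d') (by simp)
        have h1 : 1 ≤ size t2 :=
          one_le_size _ (fun p hp => le_trans (by norm_num) (h2v p (by simp [hp])))
        nlinarith
      rw [show size ([] : FlatLayout) = 1 from rfl] at hs
      omega
  | cons p t1 ih =>
    rcases p with ⟨s, d⟩
    intro L2 h1v h2v h1c h2c hs hphi
    rcases L2 with _ | ⟨⟨s', d'⟩, t2⟩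
    · exfalso
      have h2 : 2 ≤ size ((s,d) :: t1) := by
        rw [size_cons]
        have := h1v (s,d) (by simp)
        have h1 : 1 ≤ size t1 :=
          one_le_size _ (fun p hp => le_trans (by norm_num) (h1v p (by simp [hp])))
        nlinarith
      rw [show size ([] : FlatLayout) = 1 from rfl] at hs
      omega
    · have hs2 : 2 ≤ s := h1v (s,d) (by simp)
      have hs2' : 2 ≤ s' := h2v (s',d') (by simp)
      have ht1 : 1 ≤ size t1 :=
        one_le_size _ (fun p hp => le_trans (by norm_num) (h1v p (by simp [hp])))
      have h1size : 1 < size ((s,d) :: t1) := by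
        rw [size_cons]; nlinarith
      have hd : d = d' := by
        have := hphi 1 h1size
        rwa [phi_one s d t1 hs2, phi_one s' d' t2 hs2'] at this
      have hss : s = s' := by
        rcases Nat.lt_trichotomy s s' with h | h | h
        · exact absurd (head_lt_absurd s d s' d' t1 t2 h1v h2v h1c hs hphi hd h) not_false
        · exact h
        · exfalso
          refine head_lt_absurd s' d' s d t2 t1 h2v h1v h2c hs.symm ?_ hd.symm h
          intro x hx
          exact (hphi x (by omega)).symm
      subst hss
      subst hd
      have hsz : size t1 = size t2 := by
        rw [size_cons, size_cons] at hs
        exact Nat.eq_of_mul_eq_mul_left (by omega) hs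
      have htail : ∀ y < size t1, phi t1 y = phi t2 y := by
        intro y hy
        have hx : y * s < size ((s,d) :: t1) := by
          rw [size_cons, mul_comm s (size t1)]
          exact Nat.mul_lt_mul_of_pos_right hy (by omega)
        have heq := hphi (y * s) hx
        have hmod : y * s % s = 0 := Nat.mul_mod_left y s
        have hdiv : y * s / s = y := Nat.mul_div_cancel y (by omega)
        have e1 : phi ((s,d) :: t1) (y * s) = phi t1 y := by
          show y * s % s * d + phi t1 (y * s / s) = phi t1 y
          rw [hmod, hdiv, zero_mul, zero_add]
        have e2 : phi ((s,d) :: t2) (y * s) = phi t2 y := by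
          show y * s % s * d + phi t2 (y * s / s) = phi t2 y
          rw [hmod, hdiv, zero_mul, zero_add]
        rw [e1, e2] at heq
        exact heq
      have := ih t2 (fun p hp => h1v p (by simp [hp])) (fun p hp => h2v p (by simp [hp]))
        h1c.tail h2c.tail hsz htail
      rw [this]

lemma coal_props (M : FlatLayout) (hM : M.Valid) :
    (∀ p ∈ coal M, 2 ≤ p.1) ∧ ((coal M).Chain' fun p q => p.1 * p.2 ≠ q.2) ∧
    size (coal M) = size M ∧ (∀ x, phi (coal M) x = phi M x) ∧
    rank (coal M) ≤ rank M ∧ (rank (coal M) = rank M → coal M = M) := by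
  have hsq : ∀ p ∈ squeeze M, 2 ≤ p.1 := by
    intro p hp
    have hp' : p ∈ List.filter (fun p => p.1 != 1) M := hp
    obtain ⟨hmem, hcond⟩ := List.mem_filter.mp hp'
    have hpos := hM p hmem
    simp only [bne_iff_ne, ne_eq] at hcond
    omega
  refine ⟨coalAux_shapes _ hsq, coalAux_chain _, ?_, ?_, ?_, ?_⟩
  · rw [coal, size_coalAux, size_squeeze]
  · intro x; rw [coal, phi_coalAux, phi_squeeze]
  · exact le_trans (coalAux_length (squeeze M)).1 (squeeze_length M).1
  · intro h
    have h1 := (coalAux_length (squeeze M)).1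
    have h2 := (squeeze_length M).1
    have h' : (coalAux (squeeze M)).length = M.length := h
    have e2 : (squeeze M).length = M.length := by omega
    have e1 : (coalAux (squeeze M)).length = (squeeze M).length := by omega
    rw [coal, (coalAux_length _).2 e1, (squeeze_length M).2 e2]

end FlatLayout


open FlatLayout in
theorem coal_minimal_rank (L : FlatLayout) (hL : L.Valid) :
    ∀ L' : FlatLayout, L'.Valid →
      (size L' = size L ∧ ∀ x < size L, phi L' x = phi L x) →
      rank (coal L) ≤ rank L' ∧ (rank (coal L) = rank L' ↔ L' = coal L) := by
  intro L' hL' ⟨hsz, hphi⟩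
  obtain ⟨c1, c2, c3, c4, c5, c6⟩ := coal_props L hL
  obtain ⟨c1', c2', c3', c4', c5', c6'⟩ := coal_props L' hL'
  have heq : coal L' = coal L := by
    apply coalesced_eq _ _ c1' c1 c2' c2 (by rw [c3', c3, hsz])
    intro x hx
    rw [c4', c4]
    exact hphi x (by rw [c3', hsz] at hx; exact hx)
  constructor
  · rw [← heq]; exact c5'
  · constructor
    · intro h
      have h' : rank (coal L') = rank L' := by rw [heq]; exact h
      have := c6' h'
      rw [← this, heq]
    · intro h
      subst h
      rfl
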